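/- Let φ be 𝒯-good and 𝒜 = {I_j} a pairwise disjoint family of elements of S_φ. Then for every β > 0: ∫_{⋃I_j} φ^p dμ ≥ (Σ_j μ(I_j) y_{I_j}^p)/(β+1)^{p−1} + ((p−1)β/(β+1)^p)·∫_{⋃I_j}(M_𝒯φ)^p dμ, where y_{I_j} = Av_{I_j}(φ). -/

import Mathlib

open MeasureTheory Set Filter
open scoped ENNReal

/-- A tree `𝒯` on a probability space `(X, μ)` in the sense of Melas:
`X ∈ 𝒯`; every `I ∈ 𝒯` is measurable with `μ(I) > 0`; each `I ∈ 𝒯` has a finite or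
countable family `C(I) ⊆ 𝒯` of at least two pairwise disjoint elements with union `I`;
`𝒯` is the union of its generations `𝒯_(m)`; and `sup_{I ∈ 𝒯_(m)} μ(I) → 0`. -/
structure DyadicTree {X : Type*} [MeasurableSpace X] (μ : Measure X) where
  mem : Set (Set X)
  univ_mem : Set.univ ∈ mem
  meas : ∀ I ∈ mem, MeasurableSet I
  measure_pos : ∀ I ∈ mem, 0 < μ I
  C : Set X → Set (Set X)
  C_subset_mem : ∀ I ∈ mem, C I ⊆ mem
  C_countable : ∀ I ∈ mem, (C I).Countable
  C_nontrivial : ∀ I ∈ mem, ∃ J ∈ C I, ∃ K ∈ C I, J ≠ K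
  C_disjoint : ∀ I ∈ mem, (C I).Pairwise Disjoint
  C_union : ∀ I ∈ mem, ⋃₀ C I = I
  gen : ℕ → Set (Set X)
  gen_zero : gen 0 = {Set.univ}
  gen_succ : ∀ m, gen (m + 1) = ⋃ I ∈ gen m, C I
  mem_eq : mem = ⋃ m, gen m
  sup_measure_tendsto : Tendsto (fun m => ⨆ I ∈ gen m, μ I) atTop (nhds 0)

variable {X : Type*} [MeasurableSpace X]

/-- The average `Av_I(φ) = (1/μ(I)) ∫_I φ dμ`. -/
noncomputable def Av (μ : Measure X) (I : Set X) (φ : X → ℝ≥0∞) : ℝ≥0∞ :=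
  (∫⁻ y in I, φ y ∂μ) / μ I

/-- The dyadic-like maximal operator
`M_𝒯 φ(x) = sup { (1/μ(I)) ∫_I φ dμ : x ∈ I ∈ 𝒯 }`. -/
noncomputable def maxOp {μ : Measure X} (T : DyadicTree μ) (φ : X → ℝ≥0∞) (x : X) : ℝ≥0∞ :=
  ⨆ I ∈ T.mem, ⨆ _ : x ∈ I, Av μ I φ

variable {μ : Measure X}

/-- The exceptional set `𝒜_φ = {x : M_𝒯φ(x) > Av_I(φ) for all I ∈ 𝒯 with x ∈ I}`. -/
def badSet (T : DyadicTree μ) (φ : X → ℝ≥0∞) : Set X :=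
  {x | ∀ I ∈ T.mem, x ∈ I → Av μ I φ < maxOp T φ x}

/-- `φ` is `𝒯`-good if the set `𝒜_φ` has `μ`-measure zero. -/
def TGood (T : DyadicTree μ) (φ : X → ℝ≥0∞) : Prop :=
  μ (badSet T φ) = 0

/-- The set `A(φ, I) = {x ∈ X ∖ 𝒜_φ : I_φ(x) = I}`, where `I_φ(x)` is the largest
`I ∈ 𝒯` with `x ∈ I` and `M_𝒯φ(x) = Av_I(φ)`. -/
def ASet (T : DyadicTree μ) (φ : X → ℝ≥0∞) (I : Set X) : Set X :=
  {x | x ∉ badSet T φ ∧ x ∈ I ∧ maxOp T φ x = Av μ I φ ∧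
    ∀ J ∈ T.mem, x ∈ J → maxOp T φ x = Av μ J φ → J ⊆ I}

/-- The subtree `S_φ = {I ∈ 𝒯 : μ(A(φ,I)) > 0} ∪ {X}`. -/
def Sphi (T : DyadicTree μ) (φ : X → ℝ≥0∞) : Set (Set X) :=
  {I ∈ T.mem | 0 < μ (ASet T φ I)} ∪ {Set.univ}

section TreeLemmas

variable (T : DyadicTree μ)

lemma DyadicTree.gen_subset (m : ℕ) : T.gen m ⊆ T.mem := by
  rw [T.mem_eq]; exact subset_iUnion T.gen m

lemma DyadicTree.gen_countable (m : ℕ) : (T.gen m).Countable := by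
  induction m with
  | zero => rw [T.gen_zero]; exact countable_singleton _
  | succ m ih =>
    rw [T.gen_succ]
    exact ih.biUnion fun I hI => T.C_countable I (T.gen_subset m hI)

lemma DyadicTree.mem_countable : T.mem.Countable := by
  rw [T.mem_eq]; exact countable_iUnion T.gen_countable

lemma DyadicTree.child_subset {I J : Set X} (hI : I ∈ T.mem) (hJ : J ∈ T.C I) : J ⊆ I := by
  rw [← T.C_union I hI]; exact subset_sUnion_of_mem hJ

lemma DyadicTree.exists_parent {m : ℕ} {J : Set X} (hJ : J ∈ T.gen (m + 1)) :
    ∃ I ∈ T.gen m, J ⊆ I := by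
  rw [T.gen_succ] at hJ
  simp only [mem_iUnion] at hJ
  obtain ⟨I, hI, hJC⟩ := hJ
  exact ⟨I, hI, T.child_subset (T.gen_subset m hI) hJC⟩

lemma DyadicTree.exists_ancestor {m k : ℕ} {J : Set X} (hJ : J ∈ T.gen (m + k)) :
    ∃ I ∈ T.gen m, J ⊆ I := by
  induction k generalizing J with
  | zero => exact ⟨J, hJ, subset_rfl⟩
  | succ k ih =>
    obtain ⟨I', hI', hJI'⟩ := T.exists_parent hJ
    obtain ⟨I, hI, h⟩ := ih hI'
    exact ⟨I, hI, hJI'.trans h⟩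

lemma DyadicTree.gen_eq_or_disjoint {m : ℕ} {I J : Set X} (hI : I ∈ T.gen m)
    (hJ : J ∈ T.gen m) : I = J ∨ Disjoint I J := by
  induction m generalizing I J with
  | zero =>
    rw [T.gen_zero, mem_singleton_iff] at hI hJ
    left; rw [hI, hJ]
  | succ m ih =>
    rw [T.gen_succ] at hI hJ
    simp only [mem_iUnion] at hI hJ
    obtain ⟨I₀, hI₀, hIC⟩ := hI
    obtain ⟨J₀, hJ₀, hJC⟩ := hJ
    rcases ih hI₀ hJ₀ with h | h
    · subst h
      rcases eq_or_ne I J with h' | h'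
      · exact Or.inl h'
      · exact Or.inr (T.C_disjoint I₀ (T.gen_subset m hI₀) hIC hJC h')
    · exact Or.inr (h.mono (T.child_subset (T.gen_subset m hI₀) hIC)
        (T.child_subset (T.gen_subset m hJ₀) hJC))

lemma DyadicTree.subset_or_disjoint_of_le {m n : ℕ} (hmn : m ≤ n) {I J : Set X}
    (hI : I ∈ T.gen m) (hJ : J ∈ T.gen n) : J ⊆ I ∨ Disjoint I J := by
  obtain ⟨k, rfl⟩ := Nat.exists_eq_add_of_le hmn
  obtain ⟨K, hK, hJK⟩ := T.exists_ancestor hJ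
  rcases T.gen_eq_or_disjoint hK hI with rfl | hd
  · exact Or.inl hJK
  · exact Or.inr (hd.symm.mono_right hJK)

lemma DyadicTree.nested {I J : Set X} (hI : I ∈ T.mem) (hJ : J ∈ T.mem) :
    I ⊆ J ∨ J ⊆ I ∨ Disjoint I J := by
  rw [T.mem_eq] at hI hJ
  simp only [mem_iUnion] at hI hJ
  obtain ⟨m, hI⟩ := hI
  obtain ⟨n, hJ⟩ := hJ
  rcases le_total m n with h | h
  · rcases T.subset_or_disjoint_of_le h hI hJ with h' | h'
    · exact Or.inr (Or.inl h')
    · exact Or.inr (Or.inr h')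
  · rcases T.subset_or_disjoint_of_le h hJ hI with h' | h'
    · exact Or.inl h'
    · exact Or.inr (Or.inr h'.symm)

end TreeLemmas
section MaxOpLemmas

variable (T : DyadicTree μ) (φ : X → ℝ≥0∞)

lemma av_le_maxOp {I : Set X} (hI : I ∈ T.mem) {x : X} (hx : x ∈ I) :
    Av μ I φ ≤ maxOp T φ x := by
  have h1 : Av μ I φ ≤ ⨆ _ : x ∈ I, Av μ I φ := le_iSup (fun _ : x ∈ I => Av μ I φ) hx
  exact h1.trans (le_iSup₂ (f := fun J (_ : J ∈ T.mem) => ⨆ _ : x ∈ J, Av μ J φ) I hI)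

lemma exists_of_lt_maxOp {x : X} {l : ℝ≥0∞} (h : l < maxOp T φ x) :
    ∃ J ∈ T.mem, x ∈ J ∧ l < Av μ J φ := by
  rw [maxOp] at h
  simp only [lt_iSup_iff] at h
  obtain ⟨J, hJ, hxJ, h⟩ := h
  exact ⟨J, hJ, hxJ, h⟩

lemma measurable_maxOp : Measurable (maxOp T φ) := by
  have hrw : maxOp T φ = fun x =>
      ⨆ I : T.mem, (I : Set X).indicator (fun _ => Av μ (I : Set X) φ) x := by
    funext x
    rw [maxOp, iSup_subtype']
    congr 1
    funext I
    by_cases hx : x ∈ (I : Set X)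
    · rw [indicator_of_mem hx, iSup_pos hx]
    · rw [indicator_of_notMem hx, iSup_neg hx, bot_eq_zero]
  rw [hrw]
  haveI : Countable ↥T.mem := T.mem_countable.to_subtype
  exact Measurable.iSup fun I => measurable_const.indicator (T.meas I I.2)

end MaxOpLemmas
section WeakType

lemma finset_cover (T : DyadicTree μ) {φ : X → ℝ≥0∞} {l : ℝ≥0∞} :
    ∀ (n : ℕ) (s : Finset (Set X)), s.card ≤ n →
      (∀ J ∈ s, J ∈ T.mem ∧ l * μ J ≤ ∫⁻ x in J, φ x ∂μ) →
      l * μ (⋃₀ ↑s) ≤ ∫⁻ x in ⋃₀ ↑s, φ x ∂μ := by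
  classical
  intro n
  induction n with
  | zero =>
    intro s hcard _
    have : s = ∅ := Finset.card_eq_zero.mp (Nat.le_zero.mp hcard)
    subst this
    simp
  | succ n ih =>
    intro s hcard hs
    rcases s.eq_empty_or_nonempty with rfl | hne
    · simp
    obtain ⟨K, hK, hmax⟩ := s.exists_maximal hne
    set s' : Finset (Set X) := s.filter (fun J => ¬ J ⊆ K) with hs'def
    have hs'sub : ∀ J ∈ s', J ∈ s ∧ ¬ J ⊆ K := by
      intro J hJ
      simpa [hs'def] using (Finset.mem_filter.mp hJ)
    have hunion : ⋃₀ (↑s : Set (Set X)) = K ∪ ⋃₀ (↑s' : Set (Set X)) := by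
      ext x
      simp only [mem_sUnion, mem_union, Finset.mem_coe]
      constructor
      · rintro ⟨J, hJ, hxJ⟩
        by_cases h : J ⊆ K
        · exact Or.inl (h hxJ)
        · exact Or.inr ⟨J, Finset.mem_filter.mpr ⟨hJ, h⟩, hxJ⟩
      · rintro (hx | ⟨J, hJ, hxJ⟩)
        · exact ⟨K, hK, hx⟩
        · exact ⟨J, (hs'sub J hJ).1, hxJ⟩
    have hdisj : Disjoint K (⋃₀ (↑s' : Set (Set X))) := by
      rw [disjoint_sUnion_right]
      intro J hJ
      rw [Finset.mem_coe] at hJ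
      obtain ⟨hJs, hJK⟩ := hs'sub J hJ
      rcases T.nested (hs K hK).1 (hs J hJs).1 with h | h | h
      · exfalso
        rcases eq_or_ne K J with rfl | hne'
        · exact hJK subset_rfl
        · exact hne' (subset_antisymm h (hmax hJs h))
      · exact absurd h hJK
      · exact h
    have hmeas' : MeasurableSet (⋃₀ (↑s' : Set (Set X))) := by
      apply MeasurableSet.sUnion (s'.countable_toSet)
      intro J hJ
      rw [Finset.mem_coe] at hJ
      exact T.meas J (hs J (hs'sub J hJ).1).1
    have hcard' : s'.card ≤ n := by
      have h1 : s' ⊆ s.erase K := by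
        intro J hJ
        obtain ⟨hJs, hJK⟩ := hs'sub J hJ
        refine Finset.mem_erase.mpr ⟨?_, hJs⟩
        rintro rfl
        exact hJK subset_rfl
      have h2 := Finset.card_le_card h1
      rw [Finset.card_erase_of_mem hK] at h2
      omega
    have hihs' : ∀ J ∈ s', J ∈ T.mem ∧ l * μ J ≤ ∫⁻ x in J, φ x ∂μ :=
      fun J hJ => hs J (hs'sub J hJ).1
    calc l * μ (⋃₀ (↑s : Set (Set X)))
        = l * μ (K ∪ ⋃₀ (↑s' : Set (Set X))) := by rw [hunion]
      _ ≤ l * (μ K + μ (⋃₀ (↑s' : Set (Set X)))) := by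
          exact mul_le_mul_right (measure_union_le _ _) l
      _ = l * μ K + l * μ (⋃₀ (↑s' : Set (Set X))) := by rw [mul_add]
      _ ≤ (∫⁻ x in K, φ x ∂μ) + ∫⁻ x in ⋃₀ (↑s' : Set (Set X)), φ x ∂μ :=
          add_le_add (hs K hK).2 (ih s' hcard' hihs')
      _ = ∫⁻ x in K ∪ ⋃₀ (↑s' : Set (Set X)), φ x ∂μ :=
          (lintegral_union hmeas' hdisj).symm
      _ = ∫⁻ x in ⋃₀ (↑s : Set (Set X)), φ x ∂μ := by rw [hunion]

lemma weak_rev [IsFiniteMeasure μ] (T : DyadicTree μ) {φ : X → ℝ≥0∞}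
    {I : Set X} (hI : I ∈ T.mem)
    (H : ∀ J ∈ T.mem, ¬ Disjoint J I → J ⊆ I ∨ Av μ J φ ≤ Av μ I φ)
    {l : ℝ≥0∞} (hl : Av μ I φ ≤ l) :
    l * μ (I ∩ {x | l < maxOp T φ x}) ≤ ∫⁻ x in I ∩ {x | l < maxOp T φ x}, φ x ∂μ := by
  classical
  set E := I ∩ {x | l < maxOp T φ x} with hE
  set F : Set (Set X) := {J | J ∈ T.mem ∧ J ⊆ I ∧ l < Av μ J φ} with hF
  have hEF : E = ⋃₀ F := by
    ext x
    constructor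
    · rintro ⟨hxI, hx⟩
      obtain ⟨J, hJmem, hxJ, hJav⟩ := exists_of_lt_maxOp T φ hx
      have hJI : J ⊆ I := by
        have hnd : ¬ Disjoint J I := fun hd => hd.ne_of_mem hxJ hxI rfl
        rcases H J hJmem hnd with h | h
        · exact h
        · exact absurd hJav (not_lt.mpr (h.trans hl))
      exact ⟨J, ⟨hJmem, hJI, hJav⟩, hxJ⟩
    · rintro ⟨J, ⟨hJmem, hJI, hJav⟩, hxJ⟩
      exact ⟨hJI hxJ, lt_of_lt_of_le hJav (av_le_maxOp T φ hJmem hxJ)⟩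
  have hFel : ∀ J ∈ F, J ∈ T.mem ∧ l * μ J ≤ ∫⁻ x in J, φ x ∂μ := by
    rintro J ⟨hJmem, _, hJav⟩
    refine ⟨hJmem, ?_⟩
    have h0 : μ J ≠ 0 := (T.measure_pos J hJmem).ne'
    have ht : μ J ≠ ∞ := measure_ne_top μ J
    rw [Av] at hJav
    exact le_of_lt ((ENNReal.lt_div_iff_mul_lt (Or.inl h0) (Or.inl ht)).mp hJav)
  rw [hEF]
  rcases eq_empty_or_nonempty F with hFe | hFne
  · rw [hFe]; simp
  obtain ⟨f, hf⟩ := (T.mem_countable.mono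
    (fun J (hJ : J ∈ F) => hJ.1)).exists_eq_range hFne
  rw [hf, sUnion_range, measure_iUnion_eq_iSup_accumulate, ENNReal.mul_iSup]
  refine iSup_le fun N => ?_
  have hsubu : accumulate f N ⊆ ⋃ n, f n := by
    intro x hx
    obtain ⟨n, _, hn⟩ := mem_accumulate.mp hx
    exact mem_iUnion.mpr ⟨n, hn⟩
  refine le_trans ?_ (lintegral_mono_set hsubu)
  have hacc : accumulate f N = ⋃₀ ↑((Finset.range (N + 1)).image f) := by
    ext x
    simp only [mem_accumulate, mem_sUnion, Finset.coe_image, Finset.coe_range,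
      mem_image, mem_Iio]
    constructor
    · rintro ⟨n, hn, hx⟩
      exact ⟨f n, ⟨n, Nat.lt_succ_of_le hn, rfl⟩, hx⟩
    · rintro ⟨J, ⟨n, hn, rfl⟩, hx⟩
      exact ⟨n, Nat.lt_succ_iff.mp hn, hx⟩
  rw [hacc]
  refine finset_cover T _ _ le_rfl ?_
  intro J hJ
  simp only [Finset.mem_image, Finset.mem_range] at hJ
  obtain ⟨n, _, rfl⟩ := hJ
  exact hFel (f n) (by rw [hf]; exact mem_range_self n)

end WeakType
section Laycake

lemma laycake_aux {Z : Type*} [MeasurableSpace Z] (ν : Measure Z) {G : Z → ℝ≥0∞}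
    (hG : Measurable G) (hGt : ∀ x, G x ≠ ∞) {r : ℝ} (hr : 0 < r) :
    ∫⁻ x, G x ^ r ∂ν =
      ENNReal.ofReal r *
        ∫⁻ t in Ioi (0 : ℝ), ν {x | ENNReal.ofReal t < G x} * ENNReal.ofReal (t ^ (r - 1)) := by
  have hf_nn : 0 ≤ᵐ[ν] fun x => (G x).toReal :=
    Eventually.of_forall fun x => ENNReal.toReal_nonneg
  have hf_m : AEMeasurable (fun x => (G x).toReal) ν := hG.ennreal_toReal.aemeasurable
  have key := lintegral_rpow_eq_lintegral_meas_lt_mul ν hf_nn hf_m hr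
  have hL : ∀ x, ENNReal.ofReal ((G x).toReal ^ r) = G x ^ r := by
    intro x
    rw [← ENNReal.ofReal_rpow_of_nonneg ENNReal.toReal_nonneg hr.le,
      ENNReal.ofReal_toReal (hGt x)]
  simp_rw [hL] at key
  rw [key]
  congr 1
  refine setLIntegral_congr_fun measurableSet_Ioi (fun t ht => ?_)
  have hset : {a | t < (G a).toReal} = {x | ENNReal.ofReal t < G x} := by
    ext x
    simp only [mem_setOf_eq]
    exact (ENNReal.ofReal_lt_iff_lt_toReal (le_of_lt ht) (hGt x)).symm
  rw [hset]

end Laycake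
lemma lint_Ioc_rpow {Y : ℝ} (hY : 0 ≤ Y) {r : ℝ} (hr : 0 < r) :
    ∫⁻ t in Ioc (0 : ℝ) Y, ENNReal.ofReal (t ^ (r - 1)) = ENNReal.ofReal (Y ^ r / r) := by
  have hintble : IntegrableOn (fun t => t ^ (r - 1)) (Ioc 0 Y) volume :=
    (intervalIntegrable_iff_integrableOn_Ioc_of_le hY).mp
      (intervalIntegral.intervalIntegrable_rpow' (by linarith))
  have hnn : 0 ≤ᵐ[volume.restrict (Ioc (0 : ℝ) Y)] fun t => t ^ (r - 1) := by
    filter_upwards [ae_restrict_mem measurableSet_Ioc] with t ht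
    exact Real.rpow_nonneg (le_of_lt ht.1) _
  rw [← ofReal_integral_eq_lintegral_ofReal hintble hnn]
  congr 1
  rw [← intervalIntegral.integral_of_le hY, integral_rpow (Or.inl (by linarith))]
  have h1 : r - 1 + 1 = r := by ring
  rw [h1, Real.zero_rpow hr.ne', sub_zero]
section Trunc

lemma trunc_bound [IsProbabilityMeasure μ] (T : DyadicTree μ) {φ : X → ℝ≥0∞}
    (hφ : Measurable φ) (hint : ∫⁻ x, φ x ∂μ ≠ ∞) {p : ℝ} (hp : 1 < p)
    {I : Set X} (hI : I ∈ T.mem)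
    (H : ∀ J ∈ T.mem, ¬ Disjoint J I → J ⊆ I ∨ Av μ J φ ≤ Av μ I φ)
    {N : ℝ≥0∞} (hN : Av μ I φ ≤ N) (hNt : N ≠ ∞) :
    ∫⁻ x in I, (min (maxOp T φ x) N) ^ p ∂μ
        + ENNReal.ofReal (p / (p - 1)) * (μ I * Av μ I φ ^ p)
      ≤ μ I * Av μ I φ ^ p
        + ENNReal.ofReal (p / (p - 1)) *
            ∫⁻ x in I, φ x * (min (maxOp T φ x) N) ^ (p - 1) ∂μ := by
  have hp0 : (0 : ℝ) < p := by linarith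
  have hp1 : (0 : ℝ) < p - 1 := by linarith
  have hImeas : MeasurableSet I := T.meas I hI
  have hμ0 : μ I ≠ 0 := (T.measure_pos I hI).ne'
  have hμt : μ I ≠ ∞ := measure_ne_top μ I
  set y := Av μ I φ with hy_def
  have hIφt : ∫⁻ x in I, φ x ∂μ ≠ ∞ :=
    ne_top_of_le_ne_top hint (setLIntegral_le_lintegral I φ)
  have hyt : y ≠ ∞ := by
    rw [hy_def, Av]
    exact (ENNReal.div_lt_top hIφt hμ0).ne
  set Y := y.toReal with hY_def
  have hY0 : 0 ≤ Y := ENNReal.toReal_nonneg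
  have hyY : ENNReal.ofReal Y = y := ENNReal.ofReal_toReal hyt
  set G : X → ℝ≥0∞ := fun x => min (maxOp T φ x) N with hGdef
  have hGm : Measurable G := (measurable_maxOp T φ).min measurable_const
  have hGt : ∀ x, G x ≠ ∞ := fun x =>
    (lt_of_le_of_lt (min_le_right _ _) (lt_top_iff_ne_top.mpr hNt)).ne
  have hGI : ∀ x ∈ I, y ≤ G x := fun x hx =>
    le_min (av_le_maxOp T φ hI hx) hN
  set ν := μ.withDensity φ with hν_def
  have hSmeas : ∀ c : ℝ≥0∞, MeasurableSet {x | c < G x} := fun c =>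
    measurableSet_lt measurable_const hGm
  set S : ℝ → Set X := fun t => {x | ENNReal.ofReal t < G x} ∩ I with hS
  have hSm : ∀ t : ℝ, MeasurableSet (S t) := fun t => (hSmeas _).inter hImeas
  have hνIt : ν I ≠ ∞ := by rw [hν_def, withDensity_apply φ hImeas]; exact hIφt
  have h_νI : ν I = y * μ I := by
    rw [hν_def, withDensity_apply φ hImeas, hy_def, Av, ENNReal.div_mul_cancel hμ0 hμt]
  -- reverse weak-type estimate
  have hwk : ∀ t : ℝ, Y ≤ t → ENNReal.ofReal t * μ (S t) ≤ ν (S t) := by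
    intro t ht
    have hν_eq : ν (S t) = ∫⁻ x in S t, φ x ∂μ := by
      rw [hν_def]; exact withDensity_apply φ (hSm t)
    by_cases hcase : ENNReal.ofReal t < N
    · have hSeq : S t = I ∩ {x | ENNReal.ofReal t < maxOp T φ x} := by
        rw [hS]
        ext x
        simp only [mem_inter_iff, mem_setOf_eq, hGdef, lt_min_iff]
        constructor
        · rintro ⟨⟨h1, _⟩, h2⟩; exact ⟨h2, h1⟩
        · rintro ⟨h1, h2⟩; exact ⟨⟨h2, hcase⟩, h1⟩
      rw [hν_eq, hSeq]
      exact weak_rev T hI H (le_trans (le_of_eq hyY.symm) (ENNReal.ofReal_le_ofReal ht))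
    · have hSe : S t = ∅ := by
        rw [hS]
        ext x
        simp only [mem_inter_iff, mem_setOf_eq, mem_empty_iff_false, iff_false, not_and]
        intro hlt
        exact absurd (lt_of_lt_of_le hlt (min_le_right _ _)) hcase
      rw [hSe]
      simp
  -- splitting of the half-line
  have hsplit : ∀ g : ℝ → ℝ≥0∞,
      ∫⁻ t in Ioi (0 : ℝ), g t = (∫⁻ t in Ioc (0 : ℝ) Y, g t) + ∫⁻ t in Ioi Y, g t := by
    intro g
    rw [← Ioc_union_Ioi_eq_Ioi hY0, lintegral_union measurableSet_Ioi Ioc_disjoint_Ioi_same]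
  -- layer cake for exponent p
  have hres : ∀ t : ℝ, (μ.restrict I) {x | ENNReal.ofReal t < G x} = μ (S t) := by
    intro t
    rw [Measure.restrict_apply (hSmeas _), hS]
  have L1 := laycake_aux (μ.restrict I) hGm hGt hp0
  simp only [hres] at L1
  rw [hsplit] at L1
  -- layer cake for exponent p - 1 with respect to ν
  have hres2 : ∀ t : ℝ, (ν.restrict I) {x | ENNReal.ofReal t < G x} = ν (S t) := by
    intro t
    rw [Measure.restrict_apply (hSmeas _), hS]
  have L2 := laycake_aux (ν.restrict I) hGm hGt hp1
  simp only [hres2] at L2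
  rw [hsplit] at L2
  set W := ∫⁻ t in Ioi Y, ν (S t) * ENNReal.ofReal (t ^ (p - 1 - 1)) with hW
  -- Ioc piece for the ν-integral
  have WIoc : ∫⁻ t in Ioc (0 : ℝ) Y, ν (S t) * ENNReal.ofReal (t ^ (p - 1 - 1))
      = ν I * ENNReal.ofReal (Y ^ (p - 1) / (p - 1)) := by
    rw [← setLIntegral_congr Ioo_ae_eq_Ioc]
    have h2 : ∫⁻ t in Ioo (0 : ℝ) Y, ν (S t) * ENNReal.ofReal (t ^ (p - 1 - 1))
        = ∫⁻ t in Ioo (0 : ℝ) Y, ν I * ENNReal.ofReal (t ^ (p - 1 - 1)) := by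
      refine setLIntegral_congr_fun measurableSet_Ioo (fun t ht => ?_)
      congr 1
      have hsub : I ⊆ {x | ENNReal.ofReal t < G x} := by
        intro x hx
        have h3 : ENNReal.ofReal t < y := by
          rw [← hyY]
          exact (ENNReal.ofReal_lt_ofReal_iff (lt_trans ht.1 ht.2)).mpr ht.2
        exact lt_of_lt_of_le h3 (hGI x hx)
      show ν ({x | ENNReal.ofReal t < G x} ∩ I) = ν I
      rw [inter_eq_self_of_subset_right hsub]
    rw [h2, lintegral_const_mul' _ _ hνIt, setLIntegral_congr Ioo_ae_eq_Ioc,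
      lint_Ioc_rpow hY0 hp1]
  -- Ioc piece for the μ-integral
  have piece1 : ∫⁻ t in Ioc (0 : ℝ) Y, μ (S t) * ENNReal.ofReal (t ^ (p - 1))
      ≤ μ I * ENNReal.ofReal (Y ^ p / p) := by
    calc ∫⁻ t in Ioc (0 : ℝ) Y, μ (S t) * ENNReal.ofReal (t ^ (p - 1))
        ≤ ∫⁻ t in Ioc (0 : ℝ) Y, μ I * ENNReal.ofReal (t ^ (p - 1)) := by
          refine lintegral_mono fun t => ?_
          exact mul_le_mul_left (measure_mono inter_subset_right) _
      _ = μ I * ∫⁻ t in Ioc (0 : ℝ) Y, ENNReal.ofReal (t ^ (p - 1)) :=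
          lintegral_const_mul' _ _ hμt
      _ = μ I * ENNReal.ofReal (Y ^ p / p) := by rw [lint_Ioc_rpow hY0 hp0]
  -- Ioi piece comparison
  have piece2 : ∫⁻ t in Ioi Y, μ (S t) * ENNReal.ofReal (t ^ (p - 1)) ≤ W := by
    rw [hW]
    refine lintegral_mono_ae ?_
    filter_upwards [ae_restrict_mem measurableSet_Ioi] with t ht
    have ht0 : 0 < t := lt_of_le_of_lt hY0 ht
    have hts : t ^ (p - 1) = t * t ^ (p - 1 - 1) := by
      have h4 := Real.rpow_add ht0 1 (p - 1 - 1)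
      rw [Real.rpow_one, show (1 : ℝ) + (p - 1 - 1) = p - 1 by ring] at h4
      exact h4
    calc μ (S t) * ENNReal.ofReal (t ^ (p - 1))
        = μ (S t) * (ENNReal.ofReal t * ENNReal.ofReal (t ^ (p - 1 - 1))) := by
          rw [hts, ENNReal.ofReal_mul ht0.le]
      _ = (ENNReal.ofReal t * μ (S t)) * ENNReal.ofReal (t ^ (p - 1 - 1)) := by ring
      _ ≤ ν (S t) * ENNReal.ofReal (t ^ (p - 1 - 1)) :=
          mul_le_mul_left (hwk t ht.le) _
  -- constants
  set c := ENNReal.ofReal (p / (p - 1)) with hc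
  have h_c_mul : c * ENNReal.ofReal (p - 1) = ENNReal.ofReal p := by
    rw [hc, ← ENNReal.ofReal_mul (by positivity)]
    congr 1
    field_simp
  have h_ya : y * y ^ (p - 1) = y ^ p := by
    rcases eq_or_ne y 0 with h0 | h0
    · rw [h0, ENNReal.zero_rpow_of_pos hp1, ENNReal.zero_rpow_of_pos hp0, mul_zero]
    · have h4 := ENNReal.rpow_add 1 (p - 1) h0 hyt
      rw [show (1 : ℝ) + (p - 1) = p by ring, ENNReal.rpow_one] at h4
      exact h4.symm
  have h_pYp : ENNReal.ofReal p * ENNReal.ofReal (Y ^ p / p) = y ^ p := by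
    have hr : p * (Y ^ p / p) = Y ^ p := by field_simp
    rw [← ENNReal.ofReal_mul hp0.le, hr, ← ENNReal.ofReal_rpow_of_nonneg hY0 hp0.le, hyY]
  have h_pYp1 : ENNReal.ofReal p * ENNReal.ofReal (Y ^ (p - 1) / (p - 1)) = c * y ^ (p - 1) := by
    have hr : p * (Y ^ (p - 1) / (p - 1)) = (p / (p - 1)) * Y ^ (p - 1) := by ring
    rw [← ENNReal.ofReal_mul hp0.le, hr,
      ENNReal.ofReal_mul (by positivity : (0 : ℝ) ≤ p / (p - 1)),
      ← ENNReal.ofReal_rpow_of_nonneg hY0 hp1.le, hyY, hc]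
  set V := μ I * y ^ p with hV
  -- upper bound for ∫ G^p
  have hGp : ∫⁻ x in I, G x ^ p ∂μ ≤ V + ENNReal.ofReal p * W := by
    rw [L1]
    calc ENNReal.ofReal p * ((∫⁻ t in Ioc (0 : ℝ) Y, μ (S t) * ENNReal.ofReal (t ^ (p - 1)))
            + ∫⁻ t in Ioi Y, μ (S t) * ENNReal.ofReal (t ^ (p - 1)))
        ≤ ENNReal.ofReal p * (μ I * ENNReal.ofReal (Y ^ p / p) + W) :=
          mul_le_mul_right (add_le_add piece1 piece2) _
      _ = ENNReal.ofReal p * (μ I * ENNReal.ofReal (Y ^ p / p)) + ENNReal.ofReal p * W := by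
          rw [mul_add]
      _ = V + ENNReal.ofReal p * W := by
          rw [hV]
          congr 1
          calc ENNReal.ofReal p * (μ I * ENNReal.ofReal (Y ^ p / p))
              = μ I * (ENNReal.ofReal p * ENNReal.ofReal (Y ^ p / p)) := by ring
            _ = μ I * y ^ p := by rw [h_pYp]
  -- identify the right-hand side
  have h_int_ν : ∫⁻ x in I, φ x * G x ^ (p - 1) ∂μ = ∫⁻ x in I, G x ^ (p - 1) ∂ν := by
    rw [hν_def, setLIntegral_withDensity_eq_setLIntegral_mul μ hφ
      (hGm.pow measurable_const) hImeas]
    rfl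
  have hRHS : c * ∫⁻ x in I, φ x * G x ^ (p - 1) ∂μ = c * V + ENNReal.ofReal p * W := by
    rw [h_int_ν, L2, WIoc]
    have hA : ENNReal.ofReal p * (ν I * ENNReal.ofReal (Y ^ (p - 1) / (p - 1))) = c * V := by
      rw [h_νI, hV]
      calc ENNReal.ofReal p * (y * μ I * ENNReal.ofReal (Y ^ (p - 1) / (p - 1)))
          = (y * μ I) * (ENNReal.ofReal p * ENNReal.ofReal (Y ^ (p - 1) / (p - 1))) := by ring
        _ = (y * μ I) * (c * y ^ (p - 1)) := by rw [h_pYp1]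
        _ = c * (μ I * (y * y ^ (p - 1))) := by ring
        _ = c * (μ I * y ^ p) := by rw [h_ya]
    calc c * (ENNReal.ofReal (p - 1) * (ν I * ENNReal.ofReal (Y ^ (p - 1) / (p - 1)) + W))
        = (c * ENNReal.ofReal (p - 1)) * (ν I * ENNReal.ofReal (Y ^ (p - 1) / (p - 1)))
            + (c * ENNReal.ofReal (p - 1)) * W := by ring
      _ = ENNReal.ofReal p * (ν I * ENNReal.ofReal (Y ^ (p - 1) / (p - 1)))
            + ENNReal.ofReal p * W := by rw [h_c_mul]
      _ = c * V + ENNReal.ofReal p * W := by rw [hA]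
  calc ∫⁻ x in I, G x ^ p ∂μ + c * V
      ≤ (V + ENNReal.ofReal p * W) + c * V := add_le_add_left hGp _
    _ = V + (c * V + ENNReal.ofReal p * W) := by ring
    _ = V + c * ∫⁻ x in I, φ x * G x ^ (p - 1) ∂μ := by rw [hRHS]

end Trunc
section Young

lemma ofReal_div_helper {x pp : ℝ} (hx : 0 ≤ x) (hpp : 0 < pp) (z : ℝ≥0∞) :
    z * ENNReal.ofReal x / ENNReal.ofReal pp = ENNReal.ofReal (x / pp) * z := by
  rw [div_eq_mul_inv, ← ENNReal.ofReal_inv_of_pos hpp, mul_assoc,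
    ← ENNReal.ofReal_mul hx, ← div_eq_mul_inv, mul_comm]

lemma young_aux {p : ℝ} (hp : 1 < p) {t : ℝ} (ht0 : 0 < t) (a b : ℝ≥0∞) :
    a * b ^ (p - 1) ≤ ENNReal.ofReal (t ^ (1 - p) / p) * a ^ p
      + ENNReal.ofReal (t * (p - 1) / p) * b ^ p := by
  have hp0 : (0 : ℝ) < p := by linarith
  have hp1 : (0 : ℝ) < p - 1 := by linarith
  set q : ℝ := p / (p - 1) with hq
  have hq0 : (0 : ℝ) < q := by positivity
  have hpq : p.HolderConjugate q := Real.HolderConjugate.conjExponent hp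
  set c₁ := ENNReal.ofReal (t ^ ((1 - p) / p)) with hc₁
  set c₂ := ENNReal.ofReal (t ^ ((p - 1) / p)) with hc₂
  have key := ENNReal.young_inequality (a * c₁) (b ^ (p - 1) * c₂) hpq
  have hc₁₂ : c₁ * c₂ = 1 := by
    rw [hc₁, hc₂, ← ENNReal.ofReal_mul (Real.rpow_nonneg ht0.le _),
      ← Real.rpow_add ht0, show (1 - p) / p + (p - 1) / p = 0 by ring, Real.rpow_zero,
      ENNReal.ofReal_one]
  have hlhs : (a * c₁) * (b ^ (p - 1) * c₂) = a * b ^ (p - 1) := by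
    calc (a * c₁) * (b ^ (p - 1) * c₂) = (a * b ^ (p - 1)) * (c₁ * c₂) := by ring
      _ = a * b ^ (p - 1) := by rw [hc₁₂, mul_one]
  have e2 : c₁ ^ p = ENNReal.ofReal (t ^ (1 - p)) := by
    rw [hc₁, ENNReal.ofReal_rpow_of_nonneg (Real.rpow_nonneg ht0.le _) hp0.le,
      ← Real.rpow_mul ht0.le, show (1 - p) / p * p = 1 - p by field_simp]
  have hterm1 : (a * c₁) ^ p / ENNReal.ofReal p = ENNReal.ofReal (t ^ (1 - p) / p) * a ^ p := by
    rw [ENNReal.mul_rpow_of_nonneg _ _ hp0.le, e2, ofReal_div_helper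
      (Real.rpow_nonneg ht0.le _) hp0]
  have e4 : (b ^ (p - 1)) ^ q = b ^ p := by
    rw [← ENNReal.rpow_mul, show (p - 1) * q = p by rw [hq]; field_simp]
  have e5 : c₂ ^ q = ENNReal.ofReal t := by
    rw [hc₂, ENNReal.ofReal_rpow_of_nonneg (Real.rpow_nonneg ht0.le _) hq0.le,
      ← Real.rpow_mul ht0.le, show (p - 1) / p * q = 1 by rw [hq]; field_simp,
      Real.rpow_one]
  have hterm2 : (b ^ (p - 1) * c₂) ^ q / ENNReal.ofReal q
      = ENNReal.ofReal (t * (p - 1) / p) * b ^ p := by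
    rw [ENNReal.mul_rpow_of_nonneg _ _ hq0.le, e4, e5, ofReal_div_helper ht0.le hq0,
      show t / q = t * (p - 1) / p by rw [hq, div_div_eq_mul_div]]
  calc a * b ^ (p - 1) = (a * c₁) * (b ^ (p - 1) * c₂) := hlhs.symm
    _ ≤ (a * c₁) ^ p / ENNReal.ofReal p + (b ^ (p - 1) * c₂) ^ q / ENNReal.ofReal q := key
    _ = ENNReal.ofReal (t ^ (1 - p) / p) * a ^ p + ENNReal.ofReal (t * (p - 1) / p) * b ^ p := by
        rw [hterm1, hterm2]

end Young
section KeyInterval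

lemma key_interval [IsProbabilityMeasure μ] (T : DyadicTree μ) {φ : X → ℝ≥0∞}
    (hφ : Measurable φ) (hint : ∫⁻ x, φ x ∂μ ≠ ∞) {p : ℝ} (hp : 1 < p)
    {I : Set X} (hI : I ∈ T.mem)
    (H : ∀ J ∈ T.mem, ¬ Disjoint J I → J ⊆ I ∨ Av μ J φ ≤ Av μ I φ)
    {t : ℝ} (ht0 : 0 < t) (ht1 : t < 1) :
    ENNReal.ofReal (t ^ (p - 1)) * (μ I * Av μ I φ ^ p)
        + ENNReal.ofReal ((p - 1) * t ^ (p - 1) * (1 - t)) * ∫⁻ x in I, maxOp T φ x ^ p ∂μ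
      ≤ ∫⁻ x in I, φ x ^ p ∂μ := by
  have hp0 : (0 : ℝ) < p := by linarith
  have hp1 : (0 : ℝ) < p - 1 := by linarith
  have hμ0 : μ I ≠ 0 := (T.measure_pos I hI).ne'
  have hμt : μ I ≠ ∞ := measure_ne_top μ I
  set y := Av μ I φ with hy_def
  have hIφt : ∫⁻ x in I, φ x ∂μ ≠ ∞ :=
    ne_top_of_le_ne_top hint (setLIntegral_le_lintegral I φ)
  have hyt : y ≠ ∞ := by
    rw [hy_def, Av]
    exact (ENNReal.div_lt_top hIφt hμ0).ne
  set Y := y.toReal with hY_def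
  have hyY : ENNReal.ofReal Y = y := ENNReal.ofReal_toReal hyt
  set N : ℕ → ℝ≥0∞ := fun n => ENNReal.ofReal Y + n with hN_def
  have hNy : ∀ n, y ≤ N n := fun n => by
    rw [hN_def, ← hyY]; exact self_le_add_right _ _
  have hNt : ∀ n, N n ≠ ∞ := fun n =>
    ENNReal.add_ne_top.mpr ⟨ENNReal.ofReal_ne_top, ENNReal.natCast_ne_top n⟩
  set V := μ I * y ^ p with hV_def
  have hVt : V ≠ ∞ :=
    ENNReal.mul_ne_top hμt (ENNReal.rpow_lt_top_of_nonneg hp0.le hyt).ne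
  set P := ∫⁻ x in I, φ x ^ p ∂μ with hP_def
  set A : ℕ → ℝ≥0∞ := fun n => ∫⁻ x in I, (min (maxOp T φ x) (N n)) ^ p ∂μ with hA_def
  have hAnt : ∀ n, A n ≠ ∞ := by
    intro n
    have h1 : A n ≤ (N n) ^ p * μ I := by
      rw [hA_def, ← setLIntegral_const I ((N n) ^ p)]
      exact lintegral_mono fun x => ENNReal.rpow_le_rpow (min_le_right _ _) hp0.le
    exact ne_top_of_le_ne_top
      (ENNReal.mul_ne_top (ENNReal.rpow_lt_top_of_nonneg hp0.le (hNt n)).ne hμt) h1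
  set c := ENNReal.ofReal (p / (p - 1)) with hc_def
  set d := ENNReal.ofReal (1 / (p - 1)) with hd_def
  set e := ENNReal.ofReal (t ^ (1 - p) / (p - 1)) with he_def
  have hc1d : c = 1 + d := by
    rw [hc_def, hd_def, show p / (p - 1) = 1 + 1 / (p - 1) by field_simp; ring,
      ENNReal.ofReal_add zero_le_one (by positivity), ENNReal.ofReal_one]
  have hce1 : c * ENNReal.ofReal (t ^ (1 - p) / p) = e := by
    rw [hc_def, he_def, ← ENNReal.ofReal_mul (by positivity)]
    congr 1
    field_simp
  have hce2 : c * ENNReal.ofReal (t * (p - 1) / p) = ENNReal.ofReal t := by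
    rw [hc_def, ← ENNReal.ofReal_mul (by positivity)]
    congr 1
    field_simp
  -- the per-truncation estimate
  have per_n : ∀ n : ℕ, ENNReal.ofReal (t ^ (p - 1)) * V
      + ENNReal.ofReal ((p - 1) * t ^ (p - 1) * (1 - t)) * A n ≤ P := by
    intro n
    have step1 : A n + c * V
        ≤ V + c * ∫⁻ x in I, φ x * (min (maxOp T φ x) (N n)) ^ (p - 1) ∂μ :=
      trunc_bound T hφ hint hp hI H (hNy n) (hNt n)
    -- Young's inequality, integrated
    have hyoung : ∫⁻ x in I, φ x * (min (maxOp T φ x) (N n)) ^ (p - 1) ∂μ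
        ≤ ENNReal.ofReal (t ^ (1 - p) / p) * P + ENNReal.ofReal (t * (p - 1) / p) * A n := by
      rw [hP_def, hA_def, ← lintegral_const_mul' _ _ ENNReal.ofReal_ne_top,
        ← lintegral_const_mul' _ _ ENNReal.ofReal_ne_top, ← lintegral_add_left]
      · exact lintegral_mono fun x => young_aux hp ht0 (φ x) (min (maxOp T φ x) (N n))
      · exact ((hφ.pow measurable_const).const_mul _)
    have step2 : A n + c * V ≤ V + (e * P + ENNReal.ofReal t * A n) := by
      refine step1.trans ?_
      refine add_le_add_right ?_ V
      calc c * ∫⁻ x in I, φ x * (min (maxOp T φ x) (N n)) ^ (p - 1) ∂μ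
          ≤ c * (ENNReal.ofReal (t ^ (1 - p) / p) * P
              + ENNReal.ofReal (t * (p - 1) / p) * A n) := mul_le_mul_right hyoung c
        _ = (c * ENNReal.ofReal (t ^ (1 - p) / p)) * P
              + (c * ENNReal.ofReal (t * (p - 1) / p)) * A n := by ring
        _ = e * P + ENNReal.ofReal t * A n := by rw [hce1, hce2]
    -- cancel V
    have step3 : A n + d * V ≤ e * P + ENNReal.ofReal t * A n := by
      have h1 : (A n + d * V) + V ≤ (e * P + ENNReal.ofReal t * A n) + V := by
        calc (A n + d * V) + V = A n + (1 + d) * V := by ring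
          _ = A n + c * V := by rw [← hc1d]
          _ ≤ V + (e * P + ENNReal.ofReal t * A n) := step2
          _ = (e * P + ENNReal.ofReal t * A n) + V := by ring
      exact (ENNReal.add_le_add_iff_right hVt).mp h1
    -- cancel t * A n
    have step4 : ENNReal.ofReal (1 - t) * A n + d * V ≤ e * P := by
      have hsplitA : A n = ENNReal.ofReal (1 - t) * A n + ENNReal.ofReal t * A n := by
        rw [← add_mul, ← ENNReal.ofReal_add (by linarith) ht0.le,
          show (1 - t) + t = 1 by ring, ENNReal.ofReal_one, one_mul]
      have h1 : (ENNReal.ofReal (1 - t) * A n + d * V) + ENNReal.ofReal t * A n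
          ≤ e * P + ENNReal.ofReal t * A n := by
        calc (ENNReal.ofReal (1 - t) * A n + d * V) + ENNReal.ofReal t * A n
            = (ENNReal.ofReal (1 - t) * A n + ENNReal.ofReal t * A n) + d * V := by ring
          _ = A n + d * V := by rw [← hsplitA]
          _ ≤ e * P + ENNReal.ofReal t * A n := step3
      exact (ENNReal.add_le_add_iff_right
        (ENNReal.mul_ne_top ENNReal.ofReal_ne_top (hAnt n))).mp h1
    -- multiply by (p-1) t^(p-1)
    have hk_e : ENNReal.ofReal ((p - 1) * t ^ (p - 1)) * e = 1 := by
      rw [he_def, ← ENNReal.ofReal_mul (by positivity)]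
      have hr : (p - 1) * t ^ (p - 1) * (t ^ (1 - p) / (p - 1)) = t ^ (p - 1) * t ^ (1 - p) := by
        field_simp
      rw [hr, ← Real.rpow_add ht0, show p - 1 + (1 - p) = 0 by ring, Real.rpow_zero,
        ENNReal.ofReal_one]
    have hk_d : ENNReal.ofReal ((p - 1) * t ^ (p - 1)) * d = ENNReal.ofReal (t ^ (p - 1)) := by
      rw [hd_def, ← ENNReal.ofReal_mul (by positivity)]
      congr 1
      field_simp
    have hk_1t : ENNReal.ofReal ((p - 1) * t ^ (p - 1)) * ENNReal.ofReal (1 - t)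
        = ENNReal.ofReal ((p - 1) * t ^ (p - 1) * (1 - t)) := by
      rw [← ENNReal.ofReal_mul (by positivity)]
    calc ENNReal.ofReal (t ^ (p - 1)) * V
          + ENNReal.ofReal ((p - 1) * t ^ (p - 1) * (1 - t)) * A n
        = ENNReal.ofReal ((p - 1) * t ^ (p - 1))
            * (ENNReal.ofReal (1 - t) * A n + d * V) := by
          rw [← hk_1t, ← hk_d]
          ring
      _ ≤ ENNReal.ofReal ((p - 1) * t ^ (p - 1)) * (e * P) := mul_le_mul_right step4 _
      _ = (ENNReal.ofReal ((p - 1) * t ^ (p - 1)) * e) * P := by rw [mul_assoc]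
      _ = P := by rw [hk_e, one_mul]
  -- pass to the supremum in n
  have hsup_pt : ∀ a : ℝ≥0∞, (⨆ n : ℕ, (min a (N n)) ^ p) = a ^ p := by
    intro a
    refine le_antisymm (iSup_le fun n => ENNReal.rpow_le_rpow (min_le_left _ _) hp0.le) ?_
    rcases eq_or_ne a ∞ with rfl | hat
    · rw [ENNReal.top_rpow_of_pos hp0]
      refine top_le_iff.mpr ?_
      rw [iSup_eq_top]
      intro b hb
      obtain ⟨m, hm⟩ := ENNReal.exists_nat_gt hb.ne
      refine ⟨m + 1, ?_⟩
      have h1 : min (⊤ : ℝ≥0∞) (N (m + 1)) = N (m + 1) := min_eq_right le_top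
      rw [h1]
      have h2 : (1 : ℝ≥0∞) ≤ N (m + 1) := by
        rw [hN_def]
        calc (1 : ℝ≥0∞) ≤ ((m + 1 : ℕ) : ℝ≥0∞) := by
              exact_mod_cast Nat.one_le_iff_ne_zero.mpr (Nat.succ_ne_zero m)
          _ ≤ ENNReal.ofReal Y + ((m + 1 : ℕ) : ℝ≥0∞) := le_add_self
      have h3 : (m : ℝ≥0∞) < N (m + 1) := by
        rw [hN_def]
        calc (m : ℝ≥0∞) < ((m + 1 : ℕ) : ℝ≥0∞) := by exact_mod_cast Nat.lt_succ_self m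
          _ ≤ ENNReal.ofReal Y + ((m + 1 : ℕ) : ℝ≥0∞) := le_add_self
      calc b < (m : ℝ≥0∞) := hm
        _ < N (m + 1) := h3
        _ = N (m + 1) ^ (1 : ℝ) := (ENNReal.rpow_one _).symm
        _ ≤ N (m + 1) ^ p := ENNReal.rpow_le_rpow_of_exponent_le h2 (by linarith)
    · obtain ⟨m, hm⟩ := ENNReal.exists_nat_gt hat
      refine le_trans ?_ (le_iSup _ m)
      have h1 : min a (N m) = a := min_eq_left (le_trans hm.le (by rw [hN_def]; exact le_add_self))
      rw [h1]
  have hMsup : ∫⁻ x in I, maxOp T φ x ^ p ∂μ = ⨆ n, A n := by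
    rw [hA_def, ← lintegral_iSup]
    · refine lintegral_congr fun x => (hsup_pt (maxOp T φ x)).symm
    · exact fun n => ((measurable_maxOp T φ).min measurable_const).pow measurable_const
    · intro n m hnm x
      refine ENNReal.rpow_le_rpow (min_le_min le_rfl ?_) hp0.le
      rw [hN_def]
      exact add_le_add le_rfl (by exact_mod_cast hnm)
  rw [hMsup, ENNReal.mul_iSup, add_comm, ENNReal.iSup_add]
  exact iSup_le fun n => by rw [add_comm]; exact per_n n

end KeyInterval
/-- Theorem 3.2: let `φ` be `𝒯`-good and `𝒜 = {I_j}` a pairwise disjoint family of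
elements of `S_φ`. Then for every `β > 0`:
`∫_{⋃ I_j} φ^p ≥ (Σ_j μ(I_j) Av_{I_j}(φ)^p)/(β+1)^(p−1)
  + ((p−1)β/(β+1)^p) ∫_{⋃ I_j} (M_𝒯φ)^p`. -/
theorem lower_bound_on_family (μ : Measure X) [IsProbabilityMeasure μ]
    [NullSingletonClass μ] (T : DyadicTree μ) (p : ℝ) (hp : 1 < p)
    (φ : X → ℝ≥0∞) (hφ : Measurable φ) (hint : ∫⁻ y, φ y ∂μ ≠ ∞)
    (hgood : TGood T φ)
    (A : Set (Set X)) (hA : A ⊆ Sphi T φ) (hdisj : A.Pairwise Disjoint)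
    (β : ℝ) (hβ : 0 < β) :
    (∑' I : A, μ (I : Set X) * Av μ (I : Set X) φ ^ p) /
        ENNReal.ofReal ((β + 1) ^ (p - 1)) +
      ENNReal.ofReal ((p - 1) * β / (β + 1) ^ p) *
        ∫⁻ x in ⋃₀ A, maxOp T φ x ^ p ∂μ ≤
      ∫⁻ x in ⋃₀ A, φ x ^ p ∂μ := by
  have hβ1 : (0 : ℝ) < β + 1 := by linarith
  set t : ℝ := (β + 1)⁻¹ with ht_def
  have ht0 : 0 < t := by positivity
  have ht1 : t < 1 := by
    rw [ht_def]
    exact inv_lt_one_of_one_lt₀ (by linarith)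
  have hAmem : ∀ I ∈ A, I ∈ T.mem := by
    intro I hIA
    rcases hA hIA with h | h
    · exact h.1
    · rw [mem_singleton_iff] at h
      rw [h]
      exact T.univ_mem
  have hH : ∀ I ∈ A, ∀ J ∈ T.mem, ¬ Disjoint J I → J ⊆ I ∨ Av μ J φ ≤ Av μ I φ := by
    intro I hIA J hJ hnd
    rcases hA hIA with h | h
    · obtain ⟨hImem, hpos⟩ := h
      rcases T.nested hJ hImem with h1 | h1 | h1
      · exact Or.inl h1
      · obtain ⟨x₀, hx₀⟩ := nonempty_of_measure_ne_zero hpos.ne'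
        obtain ⟨-, hx₀I, hx₀max, -⟩ := hx₀
        right
        rw [← hx₀max]
        exact av_le_maxOp T φ hJ (h1 hx₀I)
      · exact absurd h1 hnd
    · rw [mem_singleton_iff] at h
      subst h
      exact Or.inl (subset_univ J)
  have hAcnt : A.Countable := T.mem_countable.mono (fun I hI => hAmem I hI)
  haveI : Countable ↥A := hAcnt.to_subtype
  have hAmeas : ∀ i : A, MeasurableSet (i : Set X) := fun i => T.meas i (hAmem i i.2)
  have hApair : Pairwise (Function.onFun Disjoint fun i : A => (i : Set X)) :=
    fun i j hij => hdisj i.2 j.2 (fun h => hij (Subtype.ext h))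
  have hU : ⋃₀ A = ⋃ i : A, (i : Set X) := sUnion_eq_iUnion
  have hMint : ∫⁻ x in ⋃₀ A, maxOp T φ x ^ p ∂μ
      = ∑' i : A, ∫⁻ x in (i : Set X), maxOp T φ x ^ p ∂μ := by
    rw [hU, lintegral_iUnion hAmeas hApair]
  have hφint : ∫⁻ x in ⋃₀ A, φ x ^ p ∂μ
      = ∑' i : A, ∫⁻ x in (i : Set X), φ x ^ p ∂μ := by
    rw [hU, lintegral_iUnion hAmeas hApair]
  have hconst1 : (ENNReal.ofReal ((β + 1) ^ (p - 1)))⁻¹ = ENNReal.ofReal (t ^ (p - 1)) := by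
    rw [ht_def, Real.inv_rpow hβ1.le,
      ENNReal.ofReal_inv_of_pos (Real.rpow_pos_of_pos hβ1 _)]
  have hconst2 : (p - 1) * β / (β + 1) ^ p = (p - 1) * t ^ (p - 1) * (1 - t) := by
    rw [ht_def, Real.inv_rpow hβ1.le]
    have h1 : 1 - (β + 1)⁻¹ = β / (β + 1) := by field_simp; ring
    rw [h1]
    have h2 : (β + 1) ^ p = (β + 1) ^ (p - 1) * (β + 1) := by
      conv_lhs => rw [show p = (p - 1) + 1 by ring]
      exact Real.rpow_add_one hβ1.ne' _
    rw [h2]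
    have h3 : (0 : ℝ) < (β + 1) ^ (p - 1) := Real.rpow_pos_of_pos hβ1 _
    field_simp
  rw [hMint, hφint, div_eq_mul_inv, hconst1, hconst2,
    ← ENNReal.tsum_mul_right, ← ENNReal.tsum_mul_left, ← ENNReal.tsum_add]
  refine ENNReal.tsum_le_tsum fun i => ?_
  have hkey := key_interval T hφ hint hp (hAmem i i.2) (hH i i.2) ht0 ht1
  have heq : μ (i : Set X) * Av μ (i : Set X) φ ^ p * ENNReal.ofReal (t ^ (p - 1))
      = ENNReal.ofReal (t ^ (p - 1)) * (μ (i : Set X) * Av μ (i : Set X) φ ^ p) := by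
    ring
  rw [heq]
  exact hkey
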